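/- Let (X, ρ) be a compact metric space and h : X → X a homeomorphism. Suppose there exist ε > 0, C > 0 and λ ∈ (0,1) such that h satisfies (AH1) with constants (ε, C, λ). Then there exist a metric ρ̃ on X inducing the same topology as ρ, together with ε̃ > 0 and λ̃ ∈ (0,1), such that h satisfies (AH1) with respect to ρ̃ with constants (ε̃, 1, λ̃), i.e. the contraction estimates hold with constant C = 1. -/

import Mathlib

open Filter Finset
set_option linter.unusedSectionVars false

section AuxAH1

variable {X : Type*} [MetricSpace X]

/-- Tent-shaped weights for the adapted metric. -/
def ahW (σ : ℝ) (M : ℕ) (j : ℕ) : ℝ := σ ^ (Nat.dist (Nat.dist j (2*M)) M)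

/-- The adapted metric candidate: weighted sum of distances along the orbit
from time `-2M` to `2M`. -/
def ahD (σ : ℝ) (M : ℕ) (f g : X → X) (x y : X) : ℝ :=
  ∑ j ∈ Finset.range (4*M+1),
    ahW σ M j * dist (f^[j] (g^[2*M] x)) (f^[j] (g^[2*M] y))

lemma ahW_nonneg {σ : ℝ} (hσ : 0 ≤ σ) (M j : ℕ) : 0 ≤ ahW σ M j :=
  pow_nonneg hσ _

lemma ahW_zero {σ : ℝ} (M : ℕ) : ahW σ M 0 = σ ^ M := by
  unfold ahW
  congr 1
  simp only [Nat.dist]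
  omega

lemma ahW_center {σ : ℝ} (M : ℕ) : ahW σ M (2*M) = σ ^ M := by
  unfold ahW
  congr 1
  simp only [Nat.dist]
  omega

lemma iterate_inv_comm_one {f g : X → X} (hfg : ∀ z, f (g z) = z)
    (hgf : ∀ z, g (f z) = z) (a : ℕ) (z : X) : g^[a] (f z) = f (g^[a] z) := by
  induction a with
  | zero => rfl
  | succ a ih =>
    rw [Function.iterate_succ_apply, hgf, Function.iterate_succ_apply', hfg]

lemma iterate_inv_comm {f g : X → X} (hfg : ∀ z, f (g z) = z)
    (hgf : ∀ z, g (f z) = z) (a b : ℕ) (z : X) :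
    g^[a] (f^[b] z) = f^[b] (g^[a] z) := by
  induction b generalizing z with
  | zero => rfl
  | succ b ih =>
    rw [Function.iterate_succ_apply, ih (f z), iterate_inv_comm_one hfg hgf,
      ← Function.iterate_succ_apply]

lemma ahD_nonneg {σ : ℝ} (hσ : 0 ≤ σ) (M : ℕ) (f g : X → X) (x y : X) :
    0 ≤ ahD σ M f g x y :=
  Finset.sum_nonneg fun j _ => mul_nonneg (ahW_nonneg hσ M j) dist_nonneg

lemma ahD_self {σ : ℝ} (M : ℕ) (f g : X → X) (x : X) : ahD σ M f g x x = 0 := by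
  simp [ahD]

lemma ahD_comm {σ : ℝ} (M : ℕ) (f g : X → X) (x y : X) :
    ahD σ M f g x y = ahD σ M f g y x := by
  unfold ahD
  exact Finset.sum_congr rfl fun j _ => by rw [dist_comm]

lemma ahD_triangle {σ : ℝ} (hσ : 0 ≤ σ) (M : ℕ) (f g : X → X) (x y z : X) :
    ahD σ M f g x z ≤ ahD σ M f g x y + ahD σ M f g y z := by
  unfold ahD
  rw [← Finset.sum_add_distrib]
  refine Finset.sum_le_sum fun j _ => ?_
  rw [← mul_add]
  exact mul_le_mul_of_nonneg_left (dist_triangle _ _ _) (ahW_nonneg hσ M j)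

lemma ahD_ge {σ : ℝ} (hσ : 0 ≤ σ) (M : ℕ) {f g : X → X}
    (hfg : ∀ z, f (g z) = z) (x y : X) :
    σ ^ M * dist x y ≤ ahD σ M f g x y := by
  have hLI : Function.LeftInverse f g := hfg
  have h2M : ∀ z : X, f^[2*M] (g^[2*M] z) = z := fun z => (hLI.iterate (2*M)) z
  have hmem : 2*M ∈ Finset.range (4*M+1) := by
    rw [Finset.mem_range]; omega
  have := Finset.single_le_sum
    (f := fun j => ahW σ M j * dist (f^[j] (g^[2*M] x)) (f^[j] (g^[2*M] y)))
    (fun j _ => mul_nonneg (ahW_nonneg hσ M j) dist_nonneg) hmem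
  rw [h2M x, h2M y, ahW_center] at this
  exact this

lemma ahD_iterate {σ : ℝ} (M : ℕ) {f g : X → X} (hfg : ∀ z, f (g z) = z)
    (hgf : ∀ z, g (f z) = z) (m : ℕ) (x y : X) :
    ahD σ M f g (f^[m] x) (f^[m] y)
      = ∑ j ∈ Finset.range (4*M+1),
          ahW σ M j * dist (f^[j+m] (g^[2*M] x)) (f^[j+m] (g^[2*M] y)) := by
  unfold ahD
  refine Finset.sum_congr rfl fun j _ => ?_
  rw [iterate_inv_comm hfg hgf (2*M) m x, iterate_inv_comm hfg hgf (2*M) m y,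
    ← Function.iterate_add_apply, ← Function.iterate_add_apply]

lemma ahD_symm {σ : ℝ} (M : ℕ) {f g : X → X} (hfg : ∀ z, f (g z) = z)
    (hgf : ∀ z, g (f z) = z) (x y : X) :
    ahD σ M f g x y = ahD σ M g f x y := by
  have hLIfg : Function.LeftInverse f g := hfg
  have hLIgf : Function.LeftInverse g f := hgf
  have hinj : ∀ k : ℕ, Function.Injective (f^[k]) := fun k =>
    (hLIgf.iterate k).injective
  have key : ∀ j, j ≤ 4*M → ∀ z : X, f^[4*M-j] (g^[2*M] z) = g^[j] (f^[2*M] z) := by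
    intro j hj z
    apply hinj j
    rw [← Function.iterate_add_apply, (hLIfg.iterate j) (f^[2*M] z)]
    have : j + (4*M - j) = 2*M + 2*M := by omega
    rw [this, Function.iterate_add_apply, (hLIfg.iterate (2*M)) z]
  unfold ahD
  rw [← Finset.sum_range_reflect]
  refine Finset.sum_congr rfl fun j hj => ?_
  rw [Finset.mem_range] at hj
  have hj' : j ≤ 4*M := by omega
  have h1 : 4*M+1-1-j = 4*M-j := by omega
  rw [h1]
  have hw : ahW σ M (4*M-j) = ahW σ M j := by
    unfold ahW
    congr 1
    simp only [Nat.dist]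
    omega
  rw [hw, key j hj' x, key j hj' y]

end AuxAH1

section KeyAH1

variable {X : Type*} [MetricSpace X]

/-- Contraction of the adapted metric on local stable sets,
with constant 1 and rate `(1+σ)/2`. -/
lemma ahD_contract {f g : X → X}
    (hfg : ∀ z, f (g z) = z) (hgf : ∀ z, g (f z) = z)
    {ε C lam σ : ℝ} (hC1 : 1 ≤ C) (hlam0 : 0 < lam) (hlamσ : lam < σ) (hσ1 : σ < 1)
    {M : ℕ}
    (hM : ((4*M+1 : ℕ) : ℝ) * (C * lam^(M+1) / σ^M) ≤ (1 - σ)/2)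
    (hAH : ∀ x y : X, (∀ n, dist (f^[n] x) (f^[n] y) ≤ ε) →
       ∀ n, dist (f^[n] x) (f^[n] y) ≤ C * lam^n * dist x y)
    (x y : X) (hxy : ∀ n, ahD σ M f g (f^[n] x) (f^[n] y) ≤ σ^M * ε) (n : ℕ) :
    ahD σ M f g (f^[n] x) (f^[n] y) ≤ ((1+σ)/2)^n * ahD σ M f g x y := by
  have hσ0 : 0 < σ := hlam0.trans hlamσ
  have hC0 : 0 < C := lt_of_lt_of_le one_pos hC1
  have hσM : (0:ℝ) < σ^M := pow_pos hσ0 M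
  -- the one-step contraction
  have onestep : ∀ p q : X, (∀ m, ahD σ M f g (f^[m] p) (f^[m] q) ≤ σ^M * ε) →
      ahD σ M f g (f p) (f q) ≤ (1+σ)/2 * ahD σ M f g p q := by
    intro p q hab
    set e : ℕ → ℝ := fun i => dist (f^[i] (g^[2*M] p)) (f^[i] (g^[2*M] q)) with he
    have he_nonneg : ∀ i, 0 ≤ e i := fun i => dist_nonneg
    have hDn : ∀ m, ahD σ M f g (f^[m] p) (f^[m] q)
        = ∑ j ∈ Finset.range (4*M+1), ahW σ M j * e (j+m) := fun m =>
      ahD_iterate M hfg hgf m p q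
    -- all distances appearing in shifted windows are ≤ ε
    have heε : ∀ i, e i ≤ ε := by
      intro i
      have h0 : 0 ∈ Finset.range (4*M+1) := by rw [Finset.mem_range]; omega
      have h1 := Finset.single_le_sum
        (f := fun j => ahW σ M j * e (j+i))
        (fun j _ => mul_nonneg (ahW_nonneg hσ0.le M j) (he_nonneg _)) h0
      rw [ahW_zero, Nat.zero_add] at h1
      have h2 : σ^M * e i ≤ σ^M * ε := le_trans h1 (by rw [← hDn i]; exact hab i)
      exact le_of_mul_le_mul_left h2 hσM
    -- AH1 estimates from every base point in the window
    have hEB : ∀ b i, e (i + b) ≤ C * lam^i * e b := by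
      intro b i
      have hmem : ∀ m : ℕ,
          dist (f^[m] (f^[b] (g^[2*M] p))) (f^[m] (f^[b] (g^[2*M] q))) ≤ ε := by
        intro m
        rw [← Function.iterate_add_apply, ← Function.iterate_add_apply]
        exact heε (m + b)
      have := hAH _ _ hmem i
      rwa [← Function.iterate_add_apply, ← Function.iterate_add_apply] at this
    set S : ℝ := ∑ j ∈ Finset.range (4*M+1), ahW σ M j * e j with hS
    have hS_nonneg : 0 ≤ S :=
      Finset.sum_nonneg fun j _ => mul_nonneg (ahW_nonneg hσ0.le M j) (he_nonneg _)
    have hsingle : ∀ j, j ∈ Finset.range (4*M+1) → ahW σ M j * e j ≤ S := by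
      intro j hj
      exact Finset.single_le_sum
        (f := fun j => ahW σ M j * e j)
        (fun j _ => mul_nonneg (ahW_nonneg hσ0.le M j) (he_nonneg _)) hj
    have hS0 : σ^M * e 0 ≤ S := by
      have := hsingle 0 (by rw [Finset.mem_range]; omega)
      rwa [ahW_zero] at this
    have hS2M : σ^M * e (2*M) ≤ S := by
      have := hsingle (2*M) (by rw [Finset.mem_range]; omega)
      rwa [ahW_center] at this
    set T : ℝ := C * lam^(M+1) / σ^M with hT
    have hT0 : 0 ≤ T := div_nonneg (mul_nonneg hC0.le (pow_nonneg hlam0.le _)) hσM.le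
    have hite_nonneg : ∀ j, 0 ≤ (if j < 4*M then ahW σ M (j+1) * e (j+1) else 0) := by
      intro j
      split
      · exact mul_nonneg (ahW_nonneg hσ0.le M _) (he_nonneg _)
      · exact le_refl 0
    -- termwise estimate
    have hterm : ∀ j ∈ Finset.range (4*M+1),
        ahW σ M j * e (j+1)
          ≤ σ * (if j < 4*M then ahW σ M (j+1) * e (j+1) else 0) + T * S := by
      intro j hj
      rw [Finset.mem_range] at hj
      rcases (by omega : (j < M ∨ (2*M ≤ j ∧ j < 3*M)) ∨ (M ≤ j ∧ j < 2*M) ∨ 3*M ≤ j)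
        with hA | hB | hC3
      · -- ascending part of the tent: pointwise contraction
        have hE : Nat.dist (Nat.dist j (2*M)) M
            = Nat.dist (Nat.dist (j+1) (2*M)) M + 1 := by
          simp only [Nat.dist]
          omega
        have hW : ahW σ M j = σ * ahW σ M (j+1) := by
          unfold ahW
          rw [hE, pow_succ]
          ring
        have hj4 : j < 4*M := by omega
        rw [if_pos hj4, hW, mul_assoc]
        exact le_add_of_nonneg_right (mul_nonneg hT0 hS_nonneg)
      · -- descending toward the center: use the AH1 estimate from base 0
        have hW : ahW σ M j = σ^(j-M) := by
          unfold ahW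
          congr 1
          simp only [Nat.dist]
          omega
        have h1 : e (j+1) ≤ C * lam^(j+1) * e 0 := by
          have := hEB 0 (j+1)
          simpa using this
        have h2 : ahW σ M j * e (j+1) ≤ σ^(j-M) * (C * lam^(j+1) * e 0) := by
          rw [hW]
          exact mul_le_mul_of_nonneg_left h1 (pow_nonneg hσ0.le _)
        have h3 : σ^(j-M) * (C * lam^(j+1) * e 0)
            = C * ((σ*lam)^(j-M) * (lam^(M+1) * e 0)) := by
          rw [show j+1 = (j-M) + (M+1) from by omega, pow_add, mul_pow]
          ring
        have h4 : (σ*lam)^(j-M) ≤ 1 :=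
          pow_le_one₀ (by positivity) (by nlinarith)
        have h5 : C * ((σ*lam)^(j-M) * (lam^(M+1) * e 0)) ≤ C * (lam^(M+1) * e 0) := by
          apply mul_le_mul_of_nonneg_left _ hC0.le
          have hnn : 0 ≤ lam^(M+1) * e 0 :=
            mul_nonneg (pow_nonneg hlam0.le _) (he_nonneg 0)
          nlinarith
        have h6 : C * (lam^(M+1) * e 0) = T * (σ^M * e 0) := by
          rw [hT]
          field_simp
        have h7 : T * (σ^M * e 0) ≤ T * S := mul_le_mul_of_nonneg_left hS0 hT0
        have hfin : ahW σ M j * e (j+1) ≤ T * S := by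
          calc ahW σ M j * e (j+1) ≤ σ^(j-M) * (C * lam^(j+1) * e 0) := h2
            _ = C * ((σ*lam)^(j-M) * (lam^(M+1) * e 0)) := h3
            _ ≤ C * (lam^(M+1) * e 0) := h5
            _ = T * (σ^M * e 0) := h6
            _ ≤ T * S := h7
        exact le_trans hfin (le_add_of_nonneg_left (mul_nonneg hσ0.le (hite_nonneg j)))
      · -- descending tail: use the AH1 estimate from base 2M
        have hW : ahW σ M j = σ^(j-3*M) := by
          unfold ahW
          congr 1
          simp only [Nat.dist]
          omega
        have hidx : (j+1-2*M) + 2*M = j+1 := by omega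
        have h1 : e (j+1) ≤ C * lam^(j+1-2*M) * e (2*M) := by
          have := hEB (2*M) (j+1-2*M)
          rwa [hidx] at this
        have h2 : ahW σ M j * e (j+1) ≤ σ^(j-3*M) * (C * lam^(j+1-2*M) * e (2*M)) := by
          rw [hW]
          exact mul_le_mul_of_nonneg_left h1 (pow_nonneg hσ0.le _)
        have h3 : σ^(j-3*M) * (C * lam^(j+1-2*M) * e (2*M))
            = C * ((σ*lam)^(j-3*M) * (lam^(M+1) * e (2*M))) := by
          rw [show j+1-2*M = (j-3*M) + (M+1) from by omega, pow_add, mul_pow]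
          ring
        have h4 : (σ*lam)^(j-3*M) ≤ 1 :=
          pow_le_one₀ (by positivity) (by nlinarith)
        have h5 : C * ((σ*lam)^(j-3*M) * (lam^(M+1) * e (2*M)))
            ≤ C * (lam^(M+1) * e (2*M)) := by
          apply mul_le_mul_of_nonneg_left _ hC0.le
          have hnn : 0 ≤ lam^(M+1) * e (2*M) :=
            mul_nonneg (pow_nonneg hlam0.le _) (he_nonneg _)
          nlinarith
        have h6 : C * (lam^(M+1) * e (2*M)) = T * (σ^M * e (2*M)) := by
          rw [hT]
          field_simp
        have h7 : T * (σ^M * e (2*M)) ≤ T * S := mul_le_mul_of_nonneg_left hS2M hT0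
        have hfin : ahW σ M j * e (j+1) ≤ T * S := by
          calc ahW σ M j * e (j+1) ≤ σ^(j-3*M) * (C * lam^(j+1-2*M) * e (2*M)) := h2
            _ = C * ((σ*lam)^(j-3*M) * (lam^(M+1) * e (2*M))) := h3
            _ ≤ C * (lam^(M+1) * e (2*M)) := h5
            _ = T * (σ^M * e (2*M)) := h6
            _ ≤ T * S := h7
        exact le_trans hfin (le_add_of_nonneg_left (mul_nonneg hσ0.le (hite_nonneg j)))
    -- summing up
    have hGS : (∑ j ∈ Finset.range (4*M+1),
        (if j < 4*M then ahW σ M (j+1) * e (j+1) else 0)) ≤ S := by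
      have h1 : (∑ j ∈ Finset.range (4*M+1),
          (if j < 4*M then ahW σ M (j+1) * e (j+1) else 0))
            = ∑ j ∈ Finset.range (4*M), ahW σ M (j+1) * e (j+1) := by
        rw [Finset.sum_range_succ, if_neg (lt_irrefl _), add_zero]
        exact Finset.sum_congr rfl fun j hj => if_pos (Finset.mem_range.mp hj)
      have h2 : S = (∑ j ∈ Finset.range (4*M), ahW σ M (j+1) * e (j+1))
          + ahW σ M 0 * e 0 := Finset.sum_range_succ' _ _
      have h3 : 0 ≤ ahW σ M 0 * e 0 := mul_nonneg (ahW_nonneg hσ0.le M 0) (he_nonneg 0)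
      rw [h1]
      linarith
    have hD1 : ahD σ M f g (f p) (f q)
        = ∑ j ∈ Finset.range (4*M+1), ahW σ M j * e (j+1) := by
      have := hDn 1
      rwa [Function.iterate_one] at this
    calc ahD σ M f g (f p) (f q)
        = ∑ j ∈ Finset.range (4*M+1), ahW σ M j * e (j+1) := hD1
      _ ≤ ∑ j ∈ Finset.range (4*M+1),
          (σ * (if j < 4*M then ahW σ M (j+1) * e (j+1) else 0) + T * S) :=
        Finset.sum_le_sum hterm
      _ = σ * (∑ j ∈ Finset.range (4*M+1),
          (if j < 4*M then ahW σ M (j+1) * e (j+1) else 0))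
          + ((4*M+1 : ℕ) : ℝ) * (T * S) := by
        rw [Finset.sum_add_distrib, ← Finset.mul_sum, Finset.sum_const,
          Finset.card_range, nsmul_eq_mul]
      _ ≤ σ * S + ((4*M+1 : ℕ) : ℝ) * (T * S) :=
        add_le_add_left (mul_le_mul_of_nonneg_left hGS hσ0.le) _
      _ ≤ σ * S + (1-σ)/2 * S := by
        have heq : ((4*M+1 : ℕ) : ℝ) * (T * S) = (((4*M+1 : ℕ) : ℝ) * T) * S := by ring
        rw [heq]
        exact add_le_add_right (mul_le_mul_of_nonneg_right hM hS_nonneg) _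
      _ = (1+σ)/2 * S := by ring
      _ = (1+σ)/2 * ahD σ M f g p q := by
        rw [hS]
        have := hDn 0
        simp only [Function.iterate_zero, id_eq, Nat.add_zero] at this
        rw [← this]
  -- induct
  induction n with
  | zero => simp
  | succ n ih =>
    have hshift : ∀ m, ahD σ M f g (f^[m] (f^[n] x)) (f^[m] (f^[n] y)) ≤ σ^M * ε := by
      intro m
      rw [← Function.iterate_add_apply, ← Function.iterate_add_apply]
      exact hxy (m + n)
    have h1 : ahD σ M f g (f^[n+1] x) (f^[n+1] y)
        ≤ (1+σ)/2 * ahD σ M f g (f^[n] x) (f^[n] y) := by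
      rw [Function.iterate_succ_apply' f n x, Function.iterate_succ_apply' f n y]
      exact onestep _ _ hshift
    have h2 : (1+σ)/2 * ahD σ M f g (f^[n] x) (f^[n] y)
        ≤ (1+σ)/2 * (((1+σ)/2)^n * ahD σ M f g x y) :=
      mul_le_mul_of_nonneg_left ih (by linarith)
    calc ahD σ M f g (f^[n+1] x) (f^[n+1] y)
        ≤ (1+σ)/2 * (((1+σ)/2)^n * ahD σ M f g x y) := le_trans h1 h2
      _ = ((1+σ)/2)^(n+1) * ahD σ M f g x y := by ring

end KeyAH1

section ContAux

variable {X : Type*} [MetricSpace X]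

lemma continuous_iterate' {Y : Type*} [TopologicalSpace Y] {f : Y → Y}
    (hf : Continuous f) (n : ℕ) : Continuous (f^[n]) := by
  induction n with
  | zero => exact continuous_id
  | succ n ih =>
    rw [Function.iterate_succ]
    exact ih.comp hf

lemma ahD_continuous {σ : ℝ} (M : ℕ) {f g : X → X} (hf : Continuous f)
    (hg : Continuous g) (x : X) : Continuous (fun y => ahD σ M f g x y) := by
  unfold ahD
  apply continuous_finset_sum
  intro j _
  exact continuous_const.mul (Continuous.dist continuous_const
    ((continuous_iterate' hf j).comp (continuous_iterate' hg (2*M))))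

end ContAux




/-- The local stable set `W^s_d(x, ε)` of a map `h` with respect to a distance
function `d`: the set of points `y` such that `d(hⁿx, hⁿy) ≤ ε` for all `n ≥ 0`.
(The local unstable set of `h` is the local stable set of `h⁻¹`.) -/
def localStableSet {X : Type*} (d : X → X → ℝ) (h : X → X) (ε : ℝ) (x : X) :
    Set X :=
  {y | ∀ n : ℕ, d (h^[n] x) (h^[n] y) ≤ ε}

/-- Condition (AH1) for a homeomorphism with iterate map `h` and inverse `hinv`,
with respect to a distance function `d` and constants `(ε, C, lam)`:
points in a local stable set contract at rate `C·lamⁿ` in forward time, and points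
in a local unstable set contract at rate `C·lamⁿ` in backward time. -/
def SatisfiesAH1 {X : Type*} (d : X → X → ℝ) (h hinv : X → X)
    (ε C lam : ℝ) : Prop :=
  (∀ x y, y ∈ localStableSet d h ε x →
    ∀ n : ℕ, d (h^[n] x) (h^[n] y) ≤ C * lam ^ n * d x y) ∧
  (∀ x y, y ∈ localStableSet d hinv ε x →
    ∀ n : ℕ, d (hinv^[n] x) (hinv^[n] y) ≤ C * lam ^ n * d x y)

/-- Adapted metric: if a homeomorphism `h` of a compact metric space satisfies
(AH1) with constants `(ε, C, lam)`, then there is an equivalent metric `d'`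
(a genuine metric whose balls form neighborhood bases for the original topology)
for which `h` satisfies (AH1) with constant `C = 1`. -/
theorem exists_adapted_metric_AH1
    {X : Type*} [MetricSpace X] [CompactSpace X] (h : X ≃ₜ X)
    (ε C lam : ℝ) (hε : 0 < ε) (hC : 0 < C) (hlam : lam ∈ Set.Ioo (0 : ℝ) 1)
    (hAH1 : SatisfiesAH1 dist (⇑h) (⇑h.symm) ε C lam) :
    ∃ d' : X → X → ℝ,
      (∀ x y, 0 ≤ d' x y) ∧
      (∀ x y, d' x y = 0 ↔ x = y) ∧
      (∀ x y, d' x y = d' y x) ∧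
      (∀ x y z, d' x z ≤ d' x y + d' y z) ∧
      (∀ x : X, (nhds x).HasBasis (fun ε₀ : ℝ => 0 < ε₀)
        (fun ε₀ => {y | d' x y < ε₀})) ∧
      ∃ ε' > 0, ∃ lam' ∈ Set.Ioo (0 : ℝ) 1,
        SatisfiesAH1 d' (⇑h) (⇑h.symm) ε' 1 lam' := by
  obtain ⟨hlam0, hlam1⟩ := hlam
  -- enlarge the constant so that `1 ≤ C₁`
  set C₁ : ℝ := max C 1 with hC₁def
  have hC₁1 : (1:ℝ) ≤ C₁ := le_max_right _ _
  have hCC₁ : C ≤ C₁ := le_max_left _ _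
  have hC₁0 : (0:ℝ) < C₁ := lt_of_lt_of_le one_pos hC₁1
  obtain ⟨σ, hσ0, hσ1, hls⟩ : ∃ σ : ℝ, 0 < σ ∧ σ < 1 ∧ lam < σ :=
    ⟨(1 + lam)/2, by linarith, by linarith, by linarith⟩
  -- choose the window size M
  have hq0 : 0 < lam/σ := div_pos hlam0 hσ0
  have hq1 : lam/σ < 1 := (div_lt_one hσ0).mpr hls
  have hsum : Summable (fun n : ℕ => (n:ℝ)^1 * (lam/σ)^n) :=
    summable_pow_mul_geometric_of_norm_lt_one 1
      (by rw [Real.norm_eq_abs, abs_of_pos hq0]; exact hq1)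
  have htend1 : Filter.Tendsto (fun n : ℕ => (n:ℝ) * (lam/σ)^n)
      Filter.atTop (nhds 0) := by
    simpa using hsum.tendsto_atTop_zero
  have htend2 : Filter.Tendsto (fun n : ℕ => (lam/σ)^n) Filter.atTop (nhds 0) :=
    tendsto_pow_atTop_nhds_zero_of_lt_one hq0.le hq1
  have hrw : ∀ n : ℕ, ((4*n+1 : ℕ) : ℝ) * (C₁ * lam^(n+1) / σ^n)
      = (4*C₁*lam) * ((n:ℝ) * (lam/σ)^n) + (C₁*lam) * ((lam/σ)^n) := by
    intro n
    have hσn : (σ:ℝ)^n ≠ 0 := (pow_pos hσ0 n).ne'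
    push_cast
    rw [div_pow]
    field_simp
    ring
  have htend : Filter.Tendsto (fun n : ℕ => ((4*n+1 : ℕ) : ℝ) * (C₁ * lam^(n+1) / σ^n))
      Filter.atTop (nhds 0) := by
    simp only [hrw]
    simpa using (htend1.const_mul (4*C₁*lam)).add (htend2.const_mul (C₁*lam))
  have hhalf : (0:ℝ) < (1 - σ)/2 := by linarith
  obtain ⟨M, hM⟩ := (htend.eventually_lt_const hhalf).exists
  have hM' : ((4*M+1 : ℕ) : ℝ) * (C₁ * lam^(M+1) / σ^M) ≤ (1 - σ)/2 := hM.le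
  -- inverse-pair facts
  have hfg : ∀ z : X, h (h.symm z) = z := fun z => h.apply_symm_apply z
  have hgf : ∀ z : X, h.symm (h z) = z := fun z => h.symm_apply_apply z
  -- the strengthened AH1 hypotheses with constant C₁
  have hAH₁ : ∀ x y : X, (∀ n, dist ((⇑h)^[n] x) ((⇑h)^[n] y) ≤ ε) →
      ∀ n, dist ((⇑h)^[n] x) ((⇑h)^[n] y) ≤ C₁ * lam^n * dist x y := by
    intro x y hm n
    have h1 := hAH1.1 x y hm n
    calc dist ((⇑h)^[n] x) ((⇑h)^[n] y) ≤ C * lam^n * dist x y := h1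
      _ ≤ C₁ * lam^n * dist x y := by
        apply mul_le_mul_of_nonneg_right _ dist_nonneg
        exact mul_le_mul_of_nonneg_right hCC₁ (pow_nonneg hlam0.le n)
  have hAH₂ : ∀ x y : X, (∀ n, dist ((⇑h.symm)^[n] x) ((⇑h.symm)^[n] y) ≤ ε) →
      ∀ n, dist ((⇑h.symm)^[n] x) ((⇑h.symm)^[n] y) ≤ C₁ * lam^n * dist x y := by
    intro x y hm n
    have h1 := hAH1.2 x y hm n
    calc dist ((⇑h.symm)^[n] x) ((⇑h.symm)^[n] y) ≤ C * lam^n * dist x y := h1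
      _ ≤ C₁ * lam^n * dist x y := by
        apply mul_le_mul_of_nonneg_right _ dist_nonneg
        exact mul_le_mul_of_nonneg_right hCC₁ (pow_nonneg hlam0.le n)
  -- the adapted metric
  set D : X → X → ℝ := ahD σ M (⇑h) (⇑h.symm) with hDdef
  have hσM : (0:ℝ) < σ^M := pow_pos hσ0 M
  have hDge : ∀ x y : X, σ^M * dist x y ≤ D x y := fun x y =>
    ahD_ge hσ0.le M hfg x y
  refine ⟨D, ?_, ?_, ?_, ?_, ?_, σ^M * ε, mul_pos hσM hε, (1+σ)/2,
    ⟨by linarith, by linarith⟩, ?_, ?_⟩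
  · exact fun x y => ahD_nonneg hσ0.le M _ _ x y
  · intro x y
    constructor
    · intro h0
      have h1 : σ^M * dist x y ≤ 0 := by rw [← h0]; exact hDge x y
      have h2 : dist x y ≤ 0 := by nlinarith [dist_nonneg (x := x) (y := y)]
      exact dist_le_zero.mp h2
    · intro hxy
      rw [hxy]
      exact ahD_self M _ _ y
  · exact fun x y => ahD_comm M _ _ x y
  · exact fun x y z => ahD_triangle hσ0.le M _ _ x y z
  · -- topology
    intro x
    rw [Filter.hasBasis_iff]
    intro t
    constructor
    · intro ht
      obtain ⟨r, hr0, hball⟩ := Metric.mem_nhds_iff.mp ht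
      refine ⟨σ^M * r, mul_pos hσM hr0, ?_⟩
      intro y hy
      apply hball
      rw [Metric.mem_ball, dist_comm]
      have h1 : σ^M * dist x y < σ^M * r := lt_of_le_of_lt (hDge x y) hy
      exact lt_of_mul_lt_mul_left h1 hσM.le
    · rintro ⟨ε₀, hε₀, hsub⟩
      refine Filter.mem_of_superset ?_ hsub
      have hopen : IsOpen {y : X | D x y < ε₀} :=
        isOpen_lt (ahD_continuous M h.continuous h.symm.continuous x) continuous_const
      refine hopen.mem_nhds ?_
      show D x x < ε₀
      rw [hDdef, ahD_self]
      exact hε₀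
  · -- stable clause
    intro x y hy n
    rw [one_mul]
    exact ahD_contract hfg hgf hC₁1 hlam0 hls hσ1 hM' hAH₁ x y hy n
  · -- unstable clause
    intro x y hy n
    rw [one_mul]
    have hy' : ∀ m, ahD σ M (⇑h.symm) (⇑h) ((⇑h.symm)^[m] x) ((⇑h.symm)^[m] y)
        ≤ σ^M * ε := by
      intro m
      rw [← ahD_symm M hfg hgf]
      exact hy m
    have := ahD_contract hgf hfg hC₁1 hlam0 hls hσ1 hM' hAH₂ x y hy' n
    calc D ((⇑h.symm)^[n] x) ((⇑h.symm)^[n] y)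
        = ahD σ M (⇑h.symm) (⇑h) ((⇑h.symm)^[n] x) ((⇑h.symm)^[n] y) :=
          ahD_symm M hfg hgf _ _
      _ ≤ ((1+σ)/2)^n * ahD σ M (⇑h.symm) (⇑h) x y := this
      _ = ((1+σ)/2)^n * D x y := by rw [← ahD_symm M hfg hgf]
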